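/- arXiv:2512.24270 — 8 statements merged into one kernel-verified Lean document; each statement's English description precedes it below -/
import Mathlib

section
/- Let A be an N×N real matrix with nonnegative entries, β ≥ 0 with β · max_i ∑_j A_{ij} < 1, and fix c ≥ 0. If two subsets S₁, S₂ of {0,…,N−1} satisfy (I − β A[S₁])^{-1} 𝟙_{S₁} ≥ c 𝟙_{S₁} entrywise and (I − β A[S₂])^{-1} 𝟙_{S₂} ≥ c 𝟙_{S₂} entrywise, then their union satisfies (I − β A[S₁ ∪ S₂])^{-1} 𝟙_{S₁ ∪ S₂} ≥ c 𝟙_{S₁ ∪ S₂} entrywise. -/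
open Matrix Filter Finset

section aux
variable {n : Type*} [Fintype n] [DecidableEq n]

attribute [local instance] Matrix.linftyOpNormedRing Matrix.linftyOpNormedAlgebra

local instance : CompleteSpace (Matrix n n ℝ) :=
  (by infer_instance : CompleteSpace (n → n → ℝ))

lemma entry_norm_le (M : Matrix n n ℝ) (i j : n) : ‖M i j‖ ≤ ‖M‖ := by
  rw [Matrix.linfty_opNorm_def]
  have h1 : (∑ k, ‖M i k‖₊ : NNReal) ≤ Finset.univ.sup fun i => ∑ j, ‖M i j‖₊ :=
    Finset.le_sup (f := fun i => ∑ j, ‖M i j‖₊) (Finset.mem_univ i)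
  calc ‖M i j‖ ≤ ((∑ k, ‖M i k‖₊ : NNReal) : ℝ) := by
        push_cast
        exact Finset.single_le_sum (fun k _ => norm_nonneg _) (Finset.mem_univ j)
    _ ≤ _ := by exact_mod_cast h1

lemma entry_continuous (i j : n) : Continuous fun M : Matrix n n ℝ => M i j := by
  refine (LipschitzWith.of_dist_le_mul (K := 1) fun M M' => ?_).continuous
  rw [NNReal.coe_one, one_mul, dist_eq_norm, dist_eq_norm]
  simpa using entry_norm_le (M - M') i j

lemma norm_lt_one {B : Matrix n n ℝ} (hB : ∀ i j, 0 ≤ B i j) (h : ∀ i, ∑ j, B i j < 1) :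
    ‖B‖ < 1 := by
  rw [Matrix.linfty_opNorm_def]
  have : (Finset.univ.sup fun i : n => ∑ j, ‖B i j‖₊) < 1 := by
    refine Finset.sup_lt_iff (by norm_num) |>.2 fun i _ => ?_
    rw [← NNReal.coe_lt_coe]
    push_cast
    calc ∑ j, (‖B i j‖₊ : ℝ) = ∑ j, B i j := by
          refine Finset.sum_congr rfl fun j _ => ?_
          simp [Real.norm_eq_abs, abs_of_nonneg (hB i j)]
      _ < 1 := h i
  exact_mod_cast this

lemma pow_entry_nonneg {B : Matrix n n ℝ} (hB : ∀ i j, 0 ≤ B i j) (m : ℕ) :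
    ∀ i j, 0 ≤ (B ^ m) i j := by
  induction m with
  | zero => intro i j; rw [pow_zero, Matrix.one_apply]; positivity
  | succ m ih =>
    intro i j
    rw [pow_succ, Matrix.mul_apply]
    exact Finset.sum_nonneg fun k _ => mul_nonneg (ih i k) (hB k j)

lemma inv_entry_nonneg {B : Matrix n n ℝ} (hnorm : ‖B‖ < 1) (hB : ∀ i j, 0 ≤ B i j) :
    ∀ i j, 0 ≤ (1 - B)⁻¹ i j := by
  intro i j
  have hs : HasSum (fun m => B ^ m) (Ring.inverse (1 - B)) := hasSum_geom_series_inverse B hnorm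
  have ht : Tendsto (fun m => (∑ k ∈ Finset.range m, B ^ k) i j) atTop
      (nhds ((Ring.inverse (1 - B)) i j)) :=
    ((entry_continuous i j).tendsto _).comp hs.tendsto_sum_nat
  rw [Matrix.nonsing_inv_eq_ringInverse]
  refine ge_of_tendsto' ht fun m => ?_
  rw [Matrix.sum_apply]
  exact Finset.sum_nonneg fun k _ => pow_entry_nonneg hB k i j

lemma one_sub_mul_inv {B : Matrix n n ℝ} (hnorm : ‖B‖ < 1) : (1 - B) * (1 - B)⁻¹ = 1 :=
  Matrix.mul_nonsing_inv _
    ((Matrix.isUnit_iff_isUnit_det _).1 (isUnit_one_sub_of_norm_lt_one hnorm))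

lemma inv_mul_one_sub {B : Matrix n n ℝ} (hnorm : ‖B‖ < 1) : (1 - B)⁻¹ * (1 - B) = 1 :=
  Matrix.nonsing_inv_mul _
    ((Matrix.isUnit_iff_isUnit_det _).1 (isUnit_one_sub_of_norm_lt_one hnorm))

end aux

/-- Principal submatrix of `A` indexed by the subset `S`. -/
def psub {N : ℕ} (A : Matrix (Fin N) (Fin N) ℝ) (S : Finset (Fin N)) :
    Matrix {i // i ∈ S} {i // i ∈ S} ℝ :=
  Matrix.of fun i j => A i.1 j.1

/-- Bonacich centrality vector `(I - β A[S])⁻¹ 𝟙_S` of the induced subnetwork on `S`. -/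
noncomputable def bon {N : ℕ} (A : Matrix (Fin N) (Fin N) ℝ) (β : ℝ) (S : Finset (Fin N)) :
    {i // i ∈ S} → ℝ :=
  (1 - β • psub A S)⁻¹ *ᵥ fun _ => 1

section bonlemmas

attribute [local instance] Matrix.linftyOpNormedRing Matrix.linftyOpNormedAlgebra

variable {N : ℕ} (A : Matrix (Fin N) (Fin N) ℝ) (β : ℝ)
  (hA : ∀ i j, 0 ≤ A i j) (hβ : 0 ≤ β) (hrow : ∀ i, β * ∑ j, A i j < 1)

include hA hβ hrow

lemma psub_norm_lt_one (S : Finset (Fin N)) : ‖β • psub A S‖ < 1 := by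
  apply norm_lt_one
  · intro i j
    exact mul_nonneg hβ (hA _ _)
  · intro i
    have h1 : ∑ j : {x // x ∈ S}, (β • psub A S) i j = β * ∑ j ∈ S, A i.1 j := by
      rw [Finset.mul_sum, ← Finset.sum_coe_sort S (fun j => β * A i.1 j)]
      rfl
    rw [h1]
    calc β * ∑ j ∈ S, A i.1 j ≤ β * ∑ j, A i.1 j := by
          refine mul_le_mul_of_nonneg_left ?_ hβ
          exact Finset.sum_le_sum_of_subset_of_nonneg (Finset.subset_univ S)
            (fun j _ _ => hA _ _)
      _ < 1 := hrow i.1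

lemma bon_fixed (S : Finset (Fin N)) :
    (1 - β • psub A S) *ᵥ bon A β S = fun _ => 1 := by
  unfold bon
  rw [Matrix.mulVec_mulVec, one_sub_mul_inv (psub_norm_lt_one A β hA hβ hrow S),
    Matrix.one_mulVec]

lemma bon_eq (S : Finset (Fin N)) (i : {x // x ∈ S}) :
    bon A β S i = 1 + β * ∑ j : {x // x ∈ S}, A i.1 j.1 * bon A β S j := by
  have h := congrFun (bon_fixed A β hA hβ hrow S) i
  rw [Matrix.sub_mulVec, Matrix.one_mulVec] at h
  simp only [Pi.sub_apply] at h
  have h2 : ((β • psub A S) *ᵥ bon A β S) i = β * ∑ j, A i.1 j.1 * bon A β S j := by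
    simp [Matrix.mulVec, dotProduct, psub, Finset.mul_sum, mul_assoc]
  rw [h2] at h
  linarith

lemma bon_nonneg (S : Finset (Fin N)) (i : {x // x ∈ S}) : 0 ≤ bon A β S i := by
  unfold bon
  simp only [Matrix.mulVec, dotProduct]
  refine Finset.sum_nonneg fun j _ => ?_
  have := inv_entry_nonneg (psub_norm_lt_one A β hA hβ hrow S)
    (fun a b => mul_nonneg hβ (hA _ _)) i j
  simpa using this

lemma bon_mono {S T : Finset (Fin N)} (hST : S ⊆ T) (i : Fin N) (hiS : i ∈ S) :
    bon A β S ⟨i, hiS⟩ ≤ bon A β T ⟨i, hST hiS⟩ := by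
  classical
  set B := β • psub A S with hBdef
  have hnorm : ‖B‖ < 1 := psub_norm_lt_one A β hA hβ hrow S
  have hBnn : ∀ a b, 0 ≤ B a b := fun a b => mul_nonneg hβ (hA _ _)
  set w : {x // x ∈ S} → ℝ := fun j => bon A β T ⟨j.1, hST j.2⟩ with hw
  set g : Fin N → ℝ := fun k => if h : k ∈ T then bon A β T ⟨k, h⟩ else 0 with hg
  have hgnn : ∀ k, 0 ≤ g k := by
    intro k
    simp only [hg]
    split
    · exact bon_nonneg A β hA hβ hrow T _
    · exact le_refl 0
  have key : ∀ j : {x // x ∈ S}, 1 ≤ ((1 - B) *ᵥ w) j := by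
    intro j
    have hsum_S : ∑ k : {x // x ∈ S}, A j.1 k.1 * w k = ∑ k ∈ S, A j.1 k * g k := by
      rw [← Finset.sum_coe_sort S (fun k => A j.1 k * g k)]
      refine Finset.sum_congr rfl fun k _ => ?_
      simp only [hg]
      rw [dif_pos (hST k.2)]
    have hsum_T : ∑ k : {x // x ∈ T}, A j.1 k.1 * bon A β T k = ∑ k ∈ T, A j.1 k * g k := by
      rw [← Finset.sum_coe_sort T (fun k => A j.1 k * g k)]
      refine Finset.sum_congr rfl fun k _ => ?_
      simp only [hg]
      rw [dif_pos k.2]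
    have hle : ∑ k ∈ S, A j.1 k * g k ≤ ∑ k ∈ T, A j.1 k * g k :=
      Finset.sum_le_sum_of_subset_of_nonneg hST fun k _ _ => mul_nonneg (hA _ _) (hgnn k)
    have hTeq := bon_eq A β hA hβ hrow T ⟨j.1, hST j.2⟩
    have hmv : ((1 - B) *ᵥ w) j = w j - β * ∑ k : {x // x ∈ S}, A j.1 k.1 * w k := by
      rw [Matrix.sub_mulVec, Matrix.one_mulVec]
      simp only [Pi.sub_apply]
      congr 1
      simp [hBdef, Matrix.mulVec, dotProduct, psub, Finset.mul_sum, mul_assoc]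
    rw [hmv]
    have hwj : w j = 1 + β * ∑ k : {x // x ∈ T}, A j.1 k.1 * bon A β T k := hTeq
    have hb : β * ∑ k : {x // x ∈ S}, A j.1 k.1 * w k
        ≤ β * ∑ k : {x // x ∈ T}, A j.1 k.1 * bon A β T k := by
      rw [hsum_S, hsum_T]
      exact mul_le_mul_of_nonneg_left hle hβ
    linarith
  have hw_eq : w = (1 - B)⁻¹ *ᵥ ((1 - B) *ᵥ w) := by
    rw [Matrix.mulVec_mulVec, inv_mul_one_sub hnorm, Matrix.one_mulVec]
  have hfinal : bon A β S ⟨i, hiS⟩ ≤ w ⟨i, hiS⟩ := by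
    conv_rhs => rw [hw_eq]
    show ((1 - B)⁻¹ *ᵥ fun _ => 1) ⟨i, hiS⟩ ≤ ((1 - B)⁻¹ *ᵥ ((1 - B) *ᵥ w)) ⟨i, hiS⟩
    simp only [Matrix.mulVec, dotProduct]
    refine Finset.sum_le_sum fun k _ => ?_
    have h0 := inv_entry_nonneg hnorm hBnn ⟨i, hiS⟩ k
    calc (1 - B)⁻¹ ⟨i, hiS⟩ k * 1 = (1 - B)⁻¹ ⟨i, hiS⟩ k := mul_one _
      _ ≤ (1 - B)⁻¹ ⟨i, hiS⟩ k * ((1 - B) *ᵥ w) k := by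
          nth_rewrite 1 [← mul_one ((1 - B)⁻¹ ⟨i, hiS⟩ k)]
          exact mul_le_mul_of_nonneg_left (key k) h0
  exact hfinal

end bonlemmas

/-- If `S₁` and `S₂` are both `c`-stable, then so is their union. -/
theorem union_stable {N : ℕ} (A : Matrix (Fin N) (Fin N) ℝ) (β : ℝ)
    (hA : ∀ i j, 0 ≤ A i j) (hβ : 0 ≤ β) (hrow : ∀ i, β * ∑ j, A i j < 1)
    (c : ℝ) (hc : 0 ≤ c) (S₁ S₂ : Finset (Fin N))
    (h₁ : ∀ i : {i // i ∈ S₁}, c ≤ bon A β S₁ i)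
    (h₂ : ∀ i : {i // i ∈ S₂}, c ≤ bon A β S₂ i) :
    ∀ i : {i // i ∈ S₁ ∪ S₂}, c ≤ bon A β (S₁ ∪ S₂) i := by
  intro i
  rcases Finset.mem_union.1 i.2 with h | h
  · have hm := bon_mono A β hA hβ hrow (Finset.subset_union_left (s₂ := S₂)) i.1 h
    have heq : (⟨i.1, Finset.subset_union_left h⟩ : {x // x ∈ S₁ ∪ S₂}) = i := Subtype.ext rfl
    rw [heq] at hm
    exact le_trans (h₁ ⟨i.1, h⟩) hm
  · have hm := bon_mono A β hA hβ hrow (Finset.subset_union_right (s₁ := S₁)) i.1 h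
    have heq : (⟨i.1, Finset.subset_union_right h⟩ : {x // x ∈ S₁ ∪ S₂}) = i := Subtype.ext rfl
    rw [heq] at hm
    exact le_trans (h₂ ⟨i.1, h⟩) hm
end

section
/- Let A be an N×N real matrix with nonnegative entries and β ≥ 0 with β · max_i ∑_j A_{ij} < 1. For any subsets S ⊆ T of {0,…,N−1} and any i ∈ S, the i-th entry of the Bonacich centrality vector of the induced subgraph on S is at most the i-th entry of that on T: [(I − β A[S])^{-1} 𝟙_S]_i ≤ [(I − β A[T])^{-1} 𝟙_T]_i. In particular, Bonacich centrality is entrywise monotone under node deletion. -/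
open Matrix

/-- Minimum principle: if `M` is entrywise nonnegative with row sums `< 1`,
and `(1 - M) *ᵥ c` is entrywise nonnegative, then `c` is entrywise nonnegative. -/
lemma key {n : Type*} [Fintype n] [DecidableEq n] (M : Matrix n n ℝ)
    (hM : ∀ i j, 0 ≤ M i j) (hrow : ∀ i, ∑ j, M i j < 1)
    (c : n → ℝ) (hc : ∀ i, 0 ≤ ((1 - M) *ᵥ c) i) : ∀ i, 0 ≤ c i := by
  intro i0
  by_contra hneg
  push_neg at hneg
  have hne : (Finset.univ : Finset n).Nonempty := ⟨i0, Finset.mem_univ _⟩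
  obtain ⟨i, -, hmin⟩ := Finset.exists_min_image Finset.univ c hne
  have hci : c i < 0 := lt_of_le_of_lt (hmin i0 (Finset.mem_univ _)) hneg
  have h1 := hc i
  rw [sub_mulVec, one_mulVec] at h1
  have h2 : (M *ᵥ c) i ≤ c i := by
    have := sub_nonneg.mp h1
    simpa using this
  have h3 : (∑ j, M i j) * c i ≤ (M *ᵥ c) i := by
    rw [Matrix.mulVec, dotProduct, Finset.sum_mul]
    refine Finset.sum_le_sum fun j _ => ?_
    exact mul_le_mul_of_nonneg_left (hmin j (Finset.mem_univ _)) (hM i j)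
  have h4 : c i < (∑ j, M i j) * c i := by
    nlinarith [hrow i, hci]
  linarith

lemma isUnit_one_sub {n : Type*} [Fintype n] [DecidableEq n] (M : Matrix n n ℝ)
    (hM : ∀ i j, 0 ≤ M i j) (hrow : ∀ i, ∑ j, M i j < 1) : IsUnit (1 - M) := by
  rw [← Matrix.mulVec_injective_iff_isUnit]
  intro x y hxy
  have h : ∀ c : n → ℝ, (1 - M) *ᵥ c = 0 → c = 0 := by
    intro c hc
    have h1 : ∀ i, 0 ≤ c i := key M hM hrow c (fun i => by rw [hc]; simp)
    have h2 : ∀ i, 0 ≤ (-c) i := key M hM hrow (-c)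
      (fun i => by rw [Matrix.mulVec_neg, hc]; simp)
    funext i
    have := h2 i
    simp only [Pi.neg_apply, neg_nonneg] at this
    exact le_antisymm this (h1 i)
  have := h (x - y) (by rw [Matrix.mulVec_sub, hxy, sub_self])
  exact sub_eq_zero.mp this

lemma M_nonneg {N : ℕ} (A : Matrix (Fin N) (Fin N) ℝ) (β : ℝ)
    (hA : ∀ i j, 0 ≤ A i j) (hβ : 0 ≤ β) (S : Finset (Fin N)) :
    ∀ i j, 0 ≤ (β • psub A S) i j := fun i j => by
  simpa [psub] using mul_nonneg hβ (hA i.1 j.1)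

lemma M_row {N : ℕ} (A : Matrix (Fin N) (Fin N) ℝ) (β : ℝ)
    (hA : ∀ i j, 0 ≤ A i j) (hβ : 0 ≤ β) (hrow : ∀ i, β * ∑ j, A i j < 1)
    (S : Finset (Fin N)) : ∀ i, ∑ j, (β • psub A S) i j < 1 := by
  intro i
  have h1 : ∑ j : {x // x ∈ S}, (β • psub A S) i j = β * ∑ j ∈ S, A i.1 j := by
    simp [psub, Finset.mul_sum]
    rw [← Finset.sum_attach S (fun j => β * A i.1 j)]
  rw [h1]
  calc β * ∑ j ∈ S, A i.1 j ≤ β * ∑ j, A i.1 j := by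
        apply mul_le_mul_of_nonneg_left _ hβ
        exact Finset.sum_le_sum_of_subset_of_nonneg (Finset.subset_univ S)
          (fun j _ _ => hA i.1 j)
    _ < 1 := hrow i.1

lemma bon_eq_s4 {N : ℕ} (A : Matrix (Fin N) (Fin N) ℝ) (β : ℝ)
    (hA : ∀ i j, 0 ≤ A i j) (hβ : 0 ≤ β) (hrow : ∀ i, β * ∑ j, A i j < 1)
    (S : Finset (Fin N)) :
    (1 - β • psub A S) *ᵥ bon A β S = fun _ => 1 := by
  have hu := isUnit_one_sub _ (M_nonneg A β hA hβ S) (M_row A β hA hβ hrow S)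
  rw [bon, Matrix.mulVec_mulVec, Matrix.mul_nonsing_inv _ ((Matrix.isUnit_iff_isUnit_det _).mp hu),
    Matrix.one_mulVec]

/-- Bonacich centrality is entrywise monotone under node deletion: for `S ⊆ T`
and `i ∈ S`, the centrality of `i` in the subnetwork on `S` is at most that in
the subnetwork on `T`. -/
theorem bonacich_monotone_node_deletion {N : ℕ} (A : Matrix (Fin N) (Fin N) ℝ) (β : ℝ)
    (hA : ∀ i j, 0 ≤ A i j) (hβ : 0 ≤ β) (hrow : ∀ i, β * ∑ j, A i j < 1)
    (S T : Finset (Fin N)) (hST : S ⊆ T) (i : Fin N) (hi : i ∈ S) :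
    bon A β S ⟨i, hi⟩ ≤ bon A β T ⟨i, hST hi⟩ := by
  classical
  set bT := bon A β T with hbT
  -- b_T is nonnegative
  have hbTnn : ∀ k, 0 ≤ bT k := by
    apply key _ (M_nonneg A β hA hβ T) (M_row A β hA hβ hrow T)
    intro k
    rw [bon_eq_s4 A β hA hβ hrow T]
    norm_num
  -- extend b_T to Fin N by 0
  set f : Fin N → ℝ := fun j => if h : j ∈ T then bT ⟨j, h⟩ else 0 with hf
  have hfnn : ∀ j, 0 ≤ f j := by
    intro j
    rw [hf]
    dsimp only
    split
    · exact hbTnn _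
    · exact le_rfl
  -- restriction of b_T to S
  set y : {x // x ∈ S} → ℝ := fun k => bT ⟨k.1, hST k.2⟩ with hy
  -- fixed point equation for b_T
  have hfix : ∀ k : {x // x ∈ T}, bT k = 1 + β * ∑ j ∈ T, A k.1 j * f j := by
    intro k
    have := congrFun (bon_eq_s4 A β hA hβ hrow T) k
    rw [sub_mulVec, one_mulVec] at this
    have hmv : ((β • psub A T) *ᵥ bT) k = β * ∑ j ∈ T, A k.1 j * f j := by
      rw [Matrix.smul_mulVec]
      simp only [Pi.smul_apply, smul_eq_mul, Matrix.mulVec, dotProduct, psub, Matrix.of_apply]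
      congr 1
      rw [← Finset.sum_attach T (fun j => A k.1 j * f j)]
      refine Finset.sum_congr rfl fun j _ => ?_
      rw [hf]
      simp [j.2]
    rw [← hbT] at this
    simp only [Pi.sub_apply] at this
    rw [hmv] at this
    linarith [this]
  -- (1 - β A[S]) *ᵥ y ≥ 1 entrywise
  have hyineq : ∀ k : {x // x ∈ S}, 1 ≤ ((1 - β • psub A S) *ᵥ y) k := by
    intro k
    rw [sub_mulVec, one_mulVec]
    have hmv : ((β • psub A S) *ᵥ y) k = β * ∑ j ∈ S, A k.1 j * f j := by
      rw [Matrix.smul_mulVec]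
      simp only [Pi.smul_apply, smul_eq_mul, Matrix.mulVec, dotProduct, psub, Matrix.of_apply]
      congr 1
      rw [← Finset.sum_attach S (fun j => A k.1 j * f j)]
      refine Finset.sum_congr rfl fun j _ => ?_
      rw [hy, hf]
      simp [hST j.2]
    have hyk : y k = 1 + β * ∑ j ∈ T, A k.1 j * f j := hfix ⟨k.1, hST k.2⟩
    simp only [Pi.sub_apply, hmv, hyk]
    have hsub : ∑ j ∈ S, A k.1 j * f j ≤ ∑ j ∈ T, A k.1 j * f j :=
      Finset.sum_le_sum_of_subset_of_nonneg hST
        (fun j _ _ => mul_nonneg (hA k.1 j) (hfnn j))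
    nlinarith
  -- conclude via the minimum principle
  have hkey : ∀ k, 0 ≤ (y - bon A β S) k := by
    apply key _ (M_nonneg A β hA hβ S) (M_row A β hA hβ hrow S)
    intro k
    rw [Matrix.mulVec_sub]
    have h1 := hyineq k
    have h2 := congrFun (bon_eq_s4 A β hA hβ hrow S) k
    simp only [Pi.sub_apply, h2]
    linarith
  have := hkey ⟨i, hi⟩
  simp only [Pi.sub_apply, hy, sub_nonneg] at this
  exact this
end

section
/- Let A be an N×N real matrix with nonnegative entries, β ≥ 0 with β · max_i ∑_j A_{ij} < 1, and α ≥ 0. Then the vector x* = α (I − β A)^{-1} 𝟙 is the unique solution in ℝ^N of the best-response system x = α 𝟙 + β A x, and it satisfies x* ≥ α 𝟙 entrywise (in particular x* is nonnegative). -/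
open Matrix

/-- `x* = α (I - βA)⁻¹ 𝟙` is the unique solution of the best-response system
`x = α 𝟙 + β A x`, and it satisfies `x* ≥ α 𝟙` entrywise. -/
theorem equilibrium_unique_and_nonneg {N : ℕ} (A : Matrix (Fin N) (Fin N) ℝ) (β α : ℝ)
    (hA : ∀ i j, 0 ≤ A i j) (hβ : 0 ≤ β) (hrow : ∀ i, β * ∑ j, A i j < 1)
    (hα : 0 ≤ α) :
    (∀ x : Fin N → ℝ,
        (x = (α • fun _ => (1 : ℝ)) + β • (A *ᵥ x) ↔
          x = α • ((1 - β • A)⁻¹ *ᵥ fun _ => 1))) ∧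
      ∀ i, α ≤ (α • ((1 - β • A)⁻¹ *ᵥ fun _ => (1 : ℝ))) i := by
  set B : Matrix (Fin N) (Fin N) ℝ := 1 - β • A with hB
  -- diagonal dominance
  have hdiag : ∀ k, β * A k k < 1 := fun k => by
    have : β * A k k ≤ β * ∑ j, A k j := by
      apply mul_le_mul_of_nonneg_left _ hβ
      exact Finset.single_le_sum (fun j _ => hA k j) (Finset.mem_univ k)
    linarith [hrow k]
  have hdet : IsUnit B.det := by
    refine (Ne.isUnit ?_)
    apply det_ne_zero_of_sum_row_lt_diag
    intro k
    have h1 : ∀ j ∈ Finset.univ.erase k, ‖B k j‖ = β * A k j := by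
      intro j hj
      have hjk : j ≠ k := Finset.ne_of_mem_erase hj
      simp only [hB, Matrix.sub_apply, Matrix.one_apply, if_neg (Ne.symm hjk),
        Matrix.smul_apply, smul_eq_mul, zero_sub, Real.norm_eq_abs, abs_neg, abs_mul]
      rw [abs_of_nonneg hβ, abs_of_nonneg (hA k j)]
    have h2 : ‖B k k‖ = 1 - β * A k k := by
      simp only [hB, Matrix.sub_apply, Matrix.one_apply_eq, Matrix.smul_apply,
        Real.norm_eq_abs, smul_eq_mul]
      rw [abs_of_nonneg]; linarith [hdiag k]
    rw [Finset.sum_congr rfl h1, h2]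
    have hsplit : ∑ j ∈ Finset.univ.erase k, β * A k j = β * ∑ j, A k j - β * A k k := by
      rw [← Finset.mul_sum, Finset.sum_erase_eq_sub (Finset.mem_univ k)]
      ring
    rw [hsplit]
    linarith [hrow k]
  have hBinv : B⁻¹ * B = 1 := Matrix.nonsing_inv_mul B hdet
  have hBinv' : B * B⁻¹ = 1 := Matrix.mul_nonsing_inv B hdet
  -- the key rewriting: B *ᵥ x = x - β • (A *ᵥ x)
  have hmul : ∀ x : Fin N → ℝ, B *ᵥ x = x - β • (A *ᵥ x) := fun x => by
    rw [hB, Matrix.sub_mulVec, Matrix.one_mulVec, Matrix.smul_mulVec]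
  have key : ∀ x : Fin N → ℝ,
      (x = (α • fun _ => (1 : ℝ)) + β • (A *ᵥ x) ↔
        x = α • (B⁻¹ *ᵥ fun _ => 1)) := by
    intro x
    constructor
    · intro h
      have hx : B *ᵥ x = (α • fun _ => (1 : ℝ)) := by
        rw [hmul]; exact sub_eq_iff_eq_add.mpr h
      have h2 := congrArg (fun v => B⁻¹ *ᵥ v) hx
      simp only [Matrix.mulVec_mulVec, hBinv, Matrix.one_mulVec] at h2
      rw [h2, Matrix.mulVec_smul]
    · intro h
      have hx : B *ᵥ x = (α • fun _ => (1 : ℝ)) := by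
        rw [h, Matrix.mulVec_smul, Matrix.mulVec_mulVec, hBinv', Matrix.one_mulVec]
      rw [hmul] at hx
      have : x - β • (A *ᵥ x) + β • (A *ᵥ x) = (α • fun _ => (1 : ℝ)) + β • (A *ᵥ x) := by
        rw [hx]
      simpa using this
  refine ⟨key, ?_⟩
  intro i
  set xs : Fin N → ℝ := α • (B⁻¹ *ᵥ fun _ => 1) with hxs
  have hfix : xs = (α • fun _ => (1 : ℝ)) + β • (A *ᵥ xs) := (key xs).mpr rfl
  have hcomp : ∀ k, xs k = α + β * ∑ j, A k j * xs j := by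
    intro k
    have := congrFun hfix k
    simpa [Matrix.mulVec, dotProduct, Finset.mul_sum] using this
  -- xs is nonnegative: take the minimum entry
  have hnonneg : ∀ k, 0 ≤ xs k := by
    intro k
    have : Nonempty (Fin N) := ⟨k⟩
    obtain ⟨m, -, hm⟩ := Finset.exists_min_image Finset.univ xs Finset.univ_nonempty
    have hm' : ∀ j, xs m ≤ xs j := fun j => hm j (Finset.mem_univ j)
    have h1 : β * (∑ j, A m j) * xs m ≤ β * ∑ j, A m j * xs j := by
      rw [mul_assoc, Finset.sum_mul]
      apply mul_le_mul_of_nonneg_left _ hβ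
      exact Finset.sum_le_sum fun j _ => mul_le_mul_of_nonneg_left (hm' j) (hA m j)
    have h2 : xs m ≥ α + β * (∑ j, A m j) * xs m := by
      linarith [hcomp m, h1]
    have h3 : xs m * (1 - β * ∑ j, A m j) ≥ α := by nlinarith
    have h4 : 0 < 1 - β * ∑ j, A m j := by linarith [hrow m]
    have h5 : 0 ≤ xs m := by nlinarith
    exact le_trans h5 (hm' k)
  have := hcomp i
  have hsum : 0 ≤ ∑ j, A i j * xs j :=
    Finset.sum_nonneg fun j _ => mul_nonneg (hA i j) (hnonneg j)
  have : α ≤ xs i := by rw [hcomp i]; nlinarith [mul_nonneg hβ hsum]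
  simpa [hxs] using this
end

section
/- Let A be an N×N real matrix with nonnegative entries, β ≥ 0 with β · max_i ∑_j A_{ij} < 1, and α ∈ ℝ. Partition the index set as V = R ∪ P with R and P disjoint. Let b = α (I − β A)^{-1} 𝟙 be the Bonacich centrality of the full network and b(R) = α (I − β A_{RR})^{-1} 𝟙_R that of the induced subnetwork on R. Then the drop vector Δ^R := b_R − b(R) satisfies (I − β A_{RR}) Δ^R = β A_{RP} b_P, and hence Δ^R = β (I − β A_{RR})^{-1} A_{RP} b_P, where b_R and b_P are the restrictions of b to R and P. -/
open Matrix

/-- Off-diagonal block `A_{RP}` of `A` for subsets `R`, `P`. -/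
def pblock {N : ℕ} (A : Matrix (Fin N) (Fin N) ℝ) (R P : Finset (Fin N)) :
    Matrix {i // i ∈ R} {j // j ∈ P} ℝ :=
  Matrix.of fun i j => A i.1 j.1

lemma unit_det {ι : Type*} [Fintype ι] [DecidableEq ι] (M : Matrix ι ι ℝ) (β : ℝ)
    (hM : ∀ i j, 0 ≤ M i j) (hβ : 0 ≤ β) (hrow : ∀ i, β * ∑ j, M i j < 1) :
    IsUnit (1 - β • M).det := by
  refine (det_ne_zero_of_sum_row_lt_diag (A := 1 - β • M) ?_).isUnit
  intro k
  have hdk : β * M k k ≤ β * ∑ j, M k j := by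
    apply mul_le_mul_of_nonneg_left _ hβ
    exact Finset.single_le_sum (fun j _ => hM k j) (Finset.mem_univ k)
  have h1 : ‖(1 - β • M) k k‖ = 1 - β * M k k := by
    simp only [Matrix.sub_apply, Matrix.one_apply_eq, Matrix.smul_apply, smul_eq_mul,
      Real.norm_eq_abs]
    rw [abs_of_nonneg]
    linarith [hrow k]
  rw [h1]
  have h2 : ∑ j ∈ Finset.univ.erase k, ‖(1 - β • M) k j‖
      = β * ∑ j ∈ Finset.univ.erase k, M k j := by
    rw [Finset.mul_sum]
    apply Finset.sum_congr rfl
    intro j hj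
    have hjk : j ≠ k := Finset.ne_of_mem_erase hj
    simp only [Matrix.sub_apply, Matrix.one_apply, Matrix.smul_apply, smul_eq_mul,
      Real.norm_eq_abs, if_neg (Ne.symm hjk), zero_sub, abs_neg, abs_mul,
      abs_of_nonneg hβ, abs_of_nonneg (hM k j)]
  rw [h2]
  have h3 : ∑ j ∈ Finset.univ.erase k, M k j = (∑ j, M k j) - M k k :=
    Finset.sum_erase_eq_sub (Finset.mem_univ k)
  rw [h3]
  have := hrow k
  nlinarith

/-- The drop vector `Δ^R = b_R - b(R)` satisfies
`(I - β A_{RR}) Δ^R = β A_{RP} b_P`, hence `Δ^R = β (I - β A_{RR})⁻¹ A_{RP} b_P`. -/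
theorem drop_vector_equation {N : ℕ} (A : Matrix (Fin N) (Fin N) ℝ) (β α : ℝ)
    (hA : ∀ i j, 0 ≤ A i j) (hβ : 0 ≤ β) (hrow : ∀ i, β * ∑ j, A i j < 1)
    (R P : Finset (Fin N)) (hdisj : Disjoint R P) (hcover : R ∪ P = Finset.univ)
    (b : Fin N → ℝ) (hb : b = α • ((1 - β • A)⁻¹ *ᵥ fun _ => 1))
    (Δ : {i // i ∈ R} → ℝ)
    (hΔ : Δ = (fun i : {i // i ∈ R} => b i.1) -
      α • ((1 - β • psub A R)⁻¹ *ᵥ fun _ => 1)) :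
    ((1 - β • psub A R) *ᵥ Δ) =
        β • (pblock A R P *ᵥ fun j : {j // j ∈ P} => b j.1) ∧
      Δ = β • ((1 - β • psub A R)⁻¹ *ᵥ
        (pblock A R P *ᵥ fun j : {j // j ∈ P} => b j.1)) := by
  have hAdet : IsUnit (1 - β • A).det := unit_det A β hA hβ hrow
  have hRdet : IsUnit (1 - β • psub A R).det := by
    apply unit_det
    · intro i j; exact hA i.1 j.1
    · exact hβ
    · intro i
      refine lt_of_le_of_lt ?_ (hrow i.1)
      apply mul_le_mul_of_nonneg_left _ hβ
      have : ∑ j : {j // j ∈ R}, psub A R i j = ∑ j ∈ R, A i.1 j :=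
        Finset.sum_coe_sort R (fun j => A i.1 j)
      rw [this]
      exact Finset.sum_le_sum_of_subset_of_nonneg (Finset.subset_univ R)
        (fun j _ _ => hA i.1 j)
  -- the full-network equation
  have hMb : (1 - β • A) *ᵥ b = fun _ => α := by
    rw [hb, Matrix.mulVec_smul, Matrix.mulVec_mulVec, Matrix.mul_nonsing_inv _ hAdet,
      Matrix.one_mulVec]
    funext i; simp
  have key : ∀ i : Fin N, b i - β * ∑ j ∈ R, A i j * b j
      = α + β * ∑ j ∈ P, A i j * b j := by
    intro i
    have h1 := congrFun hMb i
    have h2 : ((1 - β • A) *ᵥ b) i = b i - β * ∑ j, A i j * b j := by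
      simp [Matrix.mulVec, dotProduct, Matrix.sub_apply, Matrix.one_apply,
        Matrix.smul_apply, sub_mul, Finset.sum_sub_distrib, Finset.mul_sum, mul_assoc]
    have h3 : ∑ j, A i j * b j = ∑ j ∈ R, A i j * b j + ∑ j ∈ P, A i j * b j := by
      rw [← Finset.sum_union hdisj, hcover]
    rw [h2, h3] at h1
    ring_nf
    ring_nf at h1
    linarith
  have hterm2 : (1 - β • psub A R) *ᵥ
      (α • ((1 - β • psub A R)⁻¹ *ᵥ fun _ => (1:ℝ))) = fun _ => α := by
    rw [Matrix.mulVec_smul, Matrix.mulVec_mulVec, Matrix.mul_nonsing_inv _ hRdet,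
      Matrix.one_mulVec]
    funext i; simp
  have hfirst : ((1 - β • psub A R) *ᵥ Δ) =
      β • (pblock A R P *ᵥ fun j : {j // j ∈ P} => b j.1) := by
    rw [hΔ, Matrix.mulVec_sub, hterm2]
    funext i
    have h1 : ((1 - β • psub A R) *ᵥ fun i : {i // i ∈ R} => b i.1) i
        = b i.1 - β * ∑ j ∈ R, A i.1 j * b j := by
      have hs : ∑ j : {j // j ∈ R}, A i.1 j.1 * b j.1 = ∑ j ∈ R, A i.1 j * b j :=
        Finset.sum_coe_sort R (fun j => A i.1 j * b j)
      simp [Matrix.mulVec, dotProduct, Matrix.sub_apply, Matrix.one_apply,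
        Matrix.smul_apply, psub, sub_mul, Finset.sum_sub_distrib, Finset.mul_sum,
        mul_assoc, ← hs]
    have h2 : (pblock A R P *ᵥ fun j : {j // j ∈ P} => b j.1) i
        = ∑ j ∈ P, A i.1 j * b j := by
      have hs : ∑ j : {j // j ∈ P}, A i.1 j.1 * b j.1 = ∑ j ∈ P, A i.1 j * b j :=
        Finset.sum_coe_sort P (fun j => A i.1 j * b j)
      simp [Matrix.mulVec, dotProduct, pblock, ← hs]
    simp only [Pi.sub_apply, Pi.smul_apply, smul_eq_mul, h1, h2]
    have := key i.1
    linarith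
  refine ⟨hfirst, ?_⟩
  have : (1 - β • psub A R)⁻¹ *ᵥ ((1 - β • psub A R) *ᵥ Δ) = Δ := by
    rw [Matrix.mulVec_mulVec, Matrix.nonsing_inv_mul _ hRdet, Matrix.one_mulVec]
  rw [← this, hfirst, Matrix.mulVec_smul]
end

section
/- Let A be an N×N real matrix with nonnegative entries, β ≥ 0 with β · max_i ∑_j A_{ij} < 1, and α ∈ ℝ. Partition the index set as V = R ∪ P with R and P disjoint, let b = α (I − β A)^{-1} 𝟙, and suppose every entry of b indexed by P equals a common value b̲ (i.e. b_P = b̲ 𝟙_P). Define the out-degree vector d^R ∈ ℝ^R by d^R_i = ∑_{j ∈ P} A_{ij}. Then the drop vector Δ^R := b_R − α (I − β A_{RR})^{-1} 𝟙_R equals q := β b̲ (I − β A_{RR})^{-1} d^R. -/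
open Matrix

lemma det_one_sub_smul_ne {n : Type*} [Fintype n] [DecidableEq n]
    (B : Matrix n n ℝ) (β : ℝ) (hB : ∀ i j, 0 ≤ B i j) (hβ : 0 ≤ β)
    (hrow : ∀ i, β * ∑ j, B i j < 1) : (1 - β • B).det ≠ 0 := by
  apply det_ne_zero_of_sum_row_lt_diag
  intro k
  have hdk : β * B k k ≤ β * ∑ j, B k j := by
    apply mul_le_mul_of_nonneg_left _ hβ
    exact Finset.single_le_sum (fun j _ => hB k j) (Finset.mem_univ k)
  have hdiag : (1 - β • B) k k = 1 - β * B k k := by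
    simp [Matrix.sub_apply, Matrix.one_apply, Matrix.smul_apply]
  have hoff : ∀ j ∈ Finset.univ.erase k, ‖(1 - β • B) k j‖ = β * B k j := by
    intro j hj
    have hjk : j ≠ k := Finset.ne_of_mem_erase hj
    have : (1 - β • B) k j = -(β * B k j) := by
      simp [Matrix.sub_apply, Matrix.one_apply, Matrix.smul_apply, hjk.symm]
    rw [this, norm_neg, Real.norm_eq_abs, abs_of_nonneg (mul_nonneg hβ (hB k j))]
  rw [Finset.sum_congr rfl hoff, hdiag, Real.norm_eq_abs,
    abs_of_pos (by linarith [hrow k])]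
  have hsplit : β * ∑ j, B k j = β * B k k + ∑ j ∈ Finset.univ.erase k, β * B k j := by
    rw [Finset.mul_sum, ← Finset.sum_erase_add _ _ (Finset.mem_univ k)]; ring
  linarith [hrow k, hsplit ▸ hrow k]

/-- If all entries of `b` on `P` equal the common value `b̲`, then the drop vector of `R`
equals `q = β b̲ (I - β A_{RR})⁻¹ d^R`, where `d^R_i = ∑_{j ∈ P} A_{ij}`. -/
theorem drop_vector_out_degree {N : ℕ} (A : Matrix (Fin N) (Fin N) ℝ) (β α : ℝ)
    (hA : ∀ i j, 0 ≤ A i j) (hβ : 0 ≤ β) (hrow : ∀ i, β * ∑ j, A i j < 1)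
    (R P : Finset (Fin N)) (hdisj : Disjoint R P) (hcover : R ∪ P = Finset.univ)
    (b : Fin N → ℝ) (hb : b = α • ((1 - β • A)⁻¹ *ᵥ fun _ => 1))
    (bmin : ℝ) (hP : ∀ j : Fin N, j ∈ P → b j = bmin)
    (dR : {i // i ∈ R} → ℝ) (hdR : dR = fun i => ∑ j ∈ P, A i.1 j)
    (Δ : {i // i ∈ R} → ℝ)
    (hΔ : Δ = (fun i : {i // i ∈ R} => b i.1) -
      α • ((1 - β • psub A R)⁻¹ *ᵥ fun _ => 1)) :
    Δ = (β * bmin) • ((1 - β • psub A R)⁻¹ *ᵥ dR) := by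
  have hdetA : (1 - β • A).det ≠ 0 := det_one_sub_smul_ne A β hA hβ hrow
  set M : Matrix {i // i ∈ R} {i // i ∈ R} ℝ := 1 - β • psub A R with hM
  have hdetM : M.det ≠ 0 := by
    apply det_one_sub_smul_ne _ β (fun i j => hA _ _) hβ
    intro i
    have h1 : ∑ j : {i // i ∈ R}, psub A R i j = ∑ j ∈ R, A i.1 j :=
      Finset.sum_coe_sort R (fun j => A i.1 j)
    have h2 : ∑ j ∈ R, A i.1 j ≤ ∑ j, A i.1 j :=
      Finset.sum_le_sum_of_subset_of_nonneg (Finset.subset_univ R)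
        (fun j _ _ => hA i.1 j)
    calc β * ∑ j : {i // i ∈ R}, psub A R i j ≤ β * ∑ j, A i.1 j := by
          rw [h1]; exact mul_le_mul_of_nonneg_left h2 hβ
      _ < 1 := hrow i.1
  -- full equation
  have hbeq : (1 - β • A) *ᵥ b = fun _ => α := by
    rw [hb, mulVec_smul, mulVec_mulVec, Matrix.mul_nonsing_inv _
      (isUnit_iff_ne_zero.mpr hdetA), one_mulVec]
    funext i; simp
  have hfull : ∀ i : Fin N, b i - β * ∑ j, A i j * b j = α := by
    intro i
    have h := congrFun hbeq i
    simp only [mulVec, dotProduct, Matrix.sub_apply, Matrix.one_apply, Matrix.smul_apply,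
      smul_eq_mul, sub_mul, ite_mul, one_mul, zero_mul, Finset.sum_sub_distrib,
      Finset.sum_ite_eq, Finset.mem_univ, if_true] at h
    rw [Finset.mul_sum]
    simpa [mul_assoc] using h
  -- block equation
  set bR : {i // i ∈ R} → ℝ := fun i => b i.1 with hbR
  have hblock : M *ᵥ bR = (fun _ => α) + (β * bmin) • dR := by
    funext i
    have hsum : (M *ᵥ bR) i = b i.1 - β * ∑ j ∈ R, A i.1 j * b j := by
      simp only [hM, sub_mulVec, smul_mulVec, one_mulVec, Pi.sub_apply,
        Pi.smul_apply, smul_eq_mul]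
      congr 1
      congr 1
      rw [mulVec, dotProduct, ← Finset.sum_coe_sort R (fun j => A i.1 j * b j)]
      rfl
    have hsplit : ∑ j, A i.1 j * b j = ∑ j ∈ R, A i.1 j * b j
        + ∑ j ∈ P, A i.1 j * b j := by
      rw [← Finset.sum_union hdisj, hcover]
    have hPsum : ∑ j ∈ P, A i.1 j * b j = bmin * dR i := by
      rw [hdR, Finset.mul_sum]
      exact Finset.sum_congr rfl fun j hj => by rw [hP j hj]; ring
    have := hfull i.1
    rw [hsplit, hPsum] at this
    rw [hsum]
    simp only [Pi.add_apply, Pi.smul_apply, smul_eq_mul]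
    linarith
  -- invert
  have hinv : M⁻¹ *ᵥ (M *ᵥ bR) = bR := by
    rw [mulVec_mulVec, Matrix.nonsing_inv_mul _ (isUnit_iff_ne_zero.mpr hdetM),
      one_mulVec]
  have hα : (fun _ : {i // i ∈ R} => α) = α • (fun _ => (1:ℝ)) := by
    funext j; simp
  have hone : M⁻¹ *ᵥ (fun _ => α) = α • (M⁻¹ *ᵥ fun _ => (1:ℝ)) := by
    rw [hα, mulVec_smul]
  rw [hΔ]
  funext i
  have := congrFun hinv i
  rw [hblock, mulVec_add, hone, mulVec_smul] at this
  simp only [Pi.sub_apply, Pi.smul_apply, Pi.add_apply, smul_eq_mul] at this ⊢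
  linarith
end

section
/- Let A be an N×N real matrix with nonnegative entries and β ≥ 0 with β · max_i ∑_j A_{ij} < 1. Let b = (I − β A)^{-1} 𝟙 and b̲ = min_i b_i. If i is an index attaining the minimum, b_i = b̲, then for every subset S containing i, the Bonacich centrality of i in the induced subnetwork on S satisfies [(I − β A[S])^{-1} 𝟙_S]_i ≤ b̲; in particular min_{j ∈ S} [(I − β A[S])^{-1} 𝟙_S]_j ≤ b̲ whenever S contains a minimum-centrality node. -/
open Matrix

lemma aux_det_unit {n : Type*} [Fintype n] [DecidableEq n]
    (B : Matrix n n ℝ) (β : ℝ) (hB : ∀ i j, 0 ≤ B i j) (hβ : 0 ≤ β)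
    (hrow : ∀ i, β * ∑ j, B i j < 1) : IsUnit (1 - β • B).det := by
  refine isUnit_iff_ne_zero.mpr (det_ne_zero_of_sum_row_lt_diag (A := 1 - β • B) ?_)
  intro k
  have hdiag : (1 - β • B) k k = 1 - β * B k k := by
    simp [Matrix.sub_apply, Matrix.one_apply, Matrix.smul_apply, smul_eq_mul]
  have hBk : β * B k k ≤ β * ∑ j, B k j := by
    apply mul_le_mul_of_nonneg_left _ hβ
    exact Finset.single_le_sum (fun j _ => hB k j) (Finset.mem_univ k)
  have hdpos : 0 < 1 - β * B k k := by
    have := hrow k; linarith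
  have hoff : ∀ j ∈ Finset.univ.erase k, ‖(1 - β • B) k j‖ = β * B k j := by
    intro j hj
    have hjk : j ≠ k := Finset.ne_of_mem_erase hj
    have : (1 - β • B) k j = -(β * B k j) := by
      simp [Matrix.sub_apply, Matrix.one_apply, Matrix.smul_apply, smul_eq_mul,
        (Ne.symm hjk)]
    rw [this, norm_neg, Real.norm_of_nonneg (mul_nonneg hβ (hB k j))]
  calc ∑ j ∈ Finset.univ.erase k, ‖(1 - β • B) k j‖
      = ∑ j ∈ Finset.univ.erase k, β * B k j := Finset.sum_congr rfl hoff
    _ = β * ∑ j, B k j - β * B k k := by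
        rw [← Finset.mul_sum, Finset.sum_erase_eq_sub (Finset.mem_univ k)]
        ring
    _ < 1 - β * B k k := by have := hrow k; linarith
    _ = ‖(1 - β • B) k k‖ := by rw [hdiag, Real.norm_of_nonneg hdpos.le]

lemma aux_nonneg {n : Type*} [Fintype n] [DecidableEq n]
    (B : Matrix n n ℝ) (β : ℝ) (hB : ∀ i j, 0 ≤ B i j) (hβ : 0 ≤ β)
    (hrow : ∀ i, β * ∑ j, B i j < 1) (x y : n → ℝ) (hx : ∀ k, 0 ≤ x k)
    (heq : (1 - β • B) *ᵥ y = x) : ∀ k, 0 ≤ y k := by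
  by_contra h
  push_neg at h
  obtain ⟨k₀, hk₀⟩ := h
  obtain ⟨k, -, hk⟩ := Finset.exists_min_image Finset.univ y ⟨k₀, Finset.mem_univ _⟩
  have hkneg : y k < 0 := lt_of_le_of_lt (hk k₀ (Finset.mem_univ _)) hk₀
  have h1 : (1 - β • B) *ᵥ y = y - β • (B *ᵥ y) := by
    rw [Matrix.sub_mulVec, Matrix.one_mulVec, Matrix.smul_mulVec]
  have hEk : y k - β * (∑ j, B k j * y j) = x k := by
    have := congrFun heq k
    rw [h1] at this
    simpa [Matrix.mulVec, dotProduct] using this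
  have h2 : (∑ j, B k j) * y k ≤ ∑ j, B k j * y j := by
    rw [Finset.sum_mul]
    exact Finset.sum_le_sum fun j _ =>
      mul_le_mul_of_nonneg_left (hk j (Finset.mem_univ _)) (hB k j)
  have h3 : y k < (β * ∑ j, B k j) * y k := by
    have := mul_lt_mul_of_neg_right (hrow k) hkneg
    linarith
  have hx' := hx k
  nlinarith [h2, h3, hEk, hβ]

lemma aux_mulVec_eq_one {n : Type*} [Fintype n] [DecidableEq n]
    (B : Matrix n n ℝ) (β : ℝ) (hB : ∀ i j, 0 ≤ B i j) (hβ : 0 ≤ β)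
    (hrow : ∀ i, β * ∑ j, B i j < 1) :
    (1 - β • B) *ᵥ ((1 - β • B)⁻¹ *ᵥ fun _ => 1) = fun _ => (1 : ℝ) := by
  rw [Matrix.mulVec_mulVec, Matrix.mul_nonsing_inv _ (aux_det_unit B β hB hβ hrow),
    Matrix.one_mulVec]

/-- A node attaining the minimal Bonacich centrality `b̲` of the full network has
centrality at most `b̲` in every induced subnetwork containing it. -/
theorem min_node_always_below {N : ℕ} (A : Matrix (Fin N) (Fin N) ℝ) (β : ℝ)
    (hA : ∀ i j, 0 ≤ A i j) (hβ : 0 ≤ β) (hrow : ∀ i, β * ∑ j, A i j < 1)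
    (b : Fin N → ℝ) (hb : b = (1 - β • A)⁻¹ *ᵥ fun _ => 1)
    (i : Fin N) (hmin : ∀ j, b i ≤ b j)
    (S : Finset (Fin N)) (hi : i ∈ S) :
    bon A β S ⟨i, hi⟩ ≤ b i := by
  set B := psub A S with hBdef
  have hB : ∀ p q : {j // j ∈ S}, 0 ≤ B p q := fun p q => hA p.1 q.1
  have hrowS : ∀ p : {j // j ∈ S}, β * ∑ q, B p q < 1 := by
    intro p
    have hsub : ∑ q : {j // j ∈ S}, B p q ≤ ∑ j, A p.1 j := by
      have : ∑ q : {j // j ∈ S}, B p q = ∑ j ∈ S, A p.1 j := by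
        exact Finset.sum_coe_sort S (fun j => A p.1 j)
      rw [this]
      exact Finset.sum_le_sum_of_subset_of_nonneg (Finset.subset_univ S)
        (fun j _ _ => hA p.1 j)
    exact lt_of_le_of_lt (mul_le_mul_of_nonneg_left hsub hβ) (hrow p.1)
  -- full network: b satisfies (1 - βA) b = 1 and b ≥ 0
  have hMb : (1 - β • A) *ᵥ b = fun _ => (1 : ℝ) := by
    rw [hb]; exact aux_mulVec_eq_one A β hA hβ hrow
  have hbpos : ∀ k, 0 ≤ b k :=
    aux_nonneg A β hA hβ hrow _ b (fun _ => zero_le_one) hMb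
  -- restriction of b to S
  set d : {j // j ∈ S} → ℝ := fun p => b p.1 with hd
  have hMd : ∀ p : {j // j ∈ S}, 1 ≤ ((1 - β • B) *ᵥ d) p := by
    intro p
    have h1 : ((1 - β • B) *ᵥ d) p = b p.1 - β * ∑ q : {j // j ∈ S}, B p q * d q := by
      rw [Matrix.sub_mulVec, Matrix.one_mulVec, Matrix.smul_mulVec]
      simp [Matrix.mulVec, dotProduct, Finset.mul_sum, hd]
    have h2 : ∑ q : {j // j ∈ S}, B p q * d q = ∑ j ∈ S, A p.1 j * b j :=
      Finset.sum_coe_sort S (fun j => A p.1 j * b j)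
    have h3 : b p.1 - β * ∑ j, A p.1 j * b j = 1 := by
      have := congrFun hMb p.1
      rw [Matrix.sub_mulVec, Matrix.one_mulVec, Matrix.smul_mulVec] at this
      simpa [Matrix.mulVec, dotProduct, Finset.mul_sum] using this
    have hsplit : ∑ j ∈ S, A p.1 j * b j + ∑ j ∈ Sᶜ, A p.1 j * b j
        = ∑ j, A p.1 j * b j := Finset.sum_add_sum_compl S _
    have hcnn : 0 ≤ ∑ j ∈ Sᶜ, A p.1 j * b j :=
      Finset.sum_nonneg fun j _ => mul_nonneg (hA p.1 j) (hbpos j)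
    have hβc : 0 ≤ β * ∑ j ∈ Sᶜ, A p.1 j * b j := mul_nonneg hβ hcnn
    rw [h1, h2]
    nlinarith [h3, hβc, hsplit, hβ]
  -- comparison: bon ≤ d
  have hMc : (1 - β • B) *ᵥ (bon A β S) = fun _ => (1 : ℝ) :=
    aux_mulVec_eq_one B β hB hβ hrowS
  have hdiff : ∀ p, 0 ≤ (d - bon A β S) p := by
    apply aux_nonneg B β hB hβ hrowS ((1 - β • B) *ᵥ (d - bon A β S))
    · intro p
      rw [Matrix.mulVec_sub, hMc]
      have := hMd p
      simp only [Pi.sub_apply]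
      linarith
    · rfl
  have := hdiff ⟨i, hi⟩
  simp only [Pi.sub_apply] at this
  linarith [this]
end

section
/- Let A be an N×N real matrix with nonnegative entries and β ≥ 0 with β · max_i ∑_j A_{ij} < 1. Fix a subset R of {0,…,N−1}, let b = (I − β A)^{-1} 𝟙, and for any subset T define the drop vector Δ^T := b_T − (I − β A[T])^{-1} 𝟙_T where b_T is the restriction of b to T. Then for every nonempty S ⊆ R and every i ∈ S, Δ^S_i ≥ Δ^R_i ≥ 0. -/
open Matrix

/-- Drop vector of a subset `T`: the loss in Bonacich centrality relative to the
full network, `Δ^T = b_T - (I - β A[T])⁻¹ 𝟙_T`. -/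
noncomputable def drop {N : ℕ} (A : Matrix (Fin N) (Fin N) ℝ) (β : ℝ) (T : Finset (Fin N)) :
    {i // i ∈ T} → ℝ :=
  fun i => ((1 - β • A)⁻¹ *ᵥ fun _ => 1) i.1 - bon A β T i

section Core

attribute [local instance] Matrix.linftyOpNormedAddCommGroup Matrix.linftyOpNormedRing

variable {n : Type*} [Fintype n] [DecidableEq n]

instance hsgMatrix : HasSummableGeomSeries (Matrix n n ℝ) :=
  @instHasSummableGeomSeriesOfCompleteSpace _ _ (Matrix.instCompleteSpace n n ℝ)

lemma pow_entries_nonneg (B : Matrix n n ℝ) (hB : ∀ i j, 0 ≤ B i j) :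
    ∀ k, ∀ i j, 0 ≤ (B ^ k) i j := by
  intro k
  induction k with
  | zero =>
      intro i j
      rw [pow_zero]
      by_cases h : i = j <;> simp [Matrix.one_apply, h]
  | succ k ih =>
      intro i j
      rw [pow_succ, Matrix.mul_apply]
      exact Finset.sum_nonneg fun l _ => mul_nonneg (ih i l) (hB l j)

lemma norm_lt_one_of_rowsum (B : Matrix n n ℝ) (hB : ∀ i j, 0 ≤ B i j)
    (hrow : ∀ i, ∑ j, B i j < 1) : ‖B‖ < 1 := by
  rw [Matrix.linfty_opNorm_def]
  have : ((Finset.univ : Finset n).sup fun i => ∑ j, ‖B i j‖₊) < 1 := by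
    rw [Finset.sup_lt_iff (by norm_num : (⊥ : NNReal) < 1)]
    intro i _
    have h1 : ((∑ j, ‖B i j‖₊ : NNReal) : ℝ) = ∑ j, B i j := by
      push_cast
      refine Finset.sum_congr rfl fun j _ => ?_
      rw [Real.norm_eq_abs, abs_of_nonneg (hB i j)]
    have := hrow i
    rw [← NNReal.coe_lt_coe]
    rw [h1]
    simpa using this
  exact_mod_cast this

lemma one_sub_isUnit_det (B : Matrix n n ℝ) (hB : ∀ i j, 0 ≤ B i j)
    (hrow : ∀ i, ∑ j, B i j < 1) : IsUnit (1 - B).det :=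
  (Matrix.isUnit_iff_isUnit_det _).mp
    (isUnit_one_sub_of_norm_lt_one (norm_lt_one_of_rowsum B hB hrow))

lemma inv_one_sub_entries_nonneg (B : Matrix n n ℝ) (hB : ∀ i j, 0 ≤ B i j)
    (hrow : ∀ i, ∑ j, B i j < 1) : ∀ i j, 0 ≤ (1 - B)⁻¹ i j := by
  have h : ‖B‖ < 1 := norm_lt_one_of_rowsum B hB hrow
  intro i j
  have hinv : (1 - B)⁻¹ = ∑' k : ℕ, B ^ k := by
    rw [Matrix.nonsing_inv_eq_ringInverse, ← geom_series_eq_inverse B h]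
    rfl
  rw [hinv]
  have hs : Summable (fun k : ℕ => B ^ k) := summable_geometric_of_norm_lt_one h
  let f : Matrix n n ℝ →ₗ[ℝ] ℝ :=
    (LinearMap.proj (R := ℝ) (φ := fun _ : n => ℝ) j).comp
      (LinearMap.proj (R := ℝ) (φ := fun _ : n => n → ℝ) i)
  have hf : Continuous f := f.continuous_of_finiteDimensional
  have heval : (∑' k : ℕ, B ^ k) i j = ∑' k : ℕ, (B ^ k) i j :=
    ((hs.hasSum.map f hf).tsum_eq.symm :)
  rw [heval]
  exact tsum_nonneg fun k => pow_entries_nonneg B hB k i j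

lemma mulVec_mono (M : Matrix n n ℝ) (hM : ∀ i j, 0 ≤ M i j) {x y : n → ℝ}
    (h : ∀ i, x i ≤ y i) (i : n) : (M *ᵥ x) i ≤ (M *ᵥ y) i := by
  simp only [Matrix.mulVec, dotProduct]
  exact Finset.sum_le_sum fun j _ => mul_le_mul_of_nonneg_left (h j) (hM i j)

lemma mulVec_nonneg (M : Matrix n n ℝ) (hM : ∀ i j, 0 ≤ M i j) {v : n → ℝ}
    (hv : ∀ j, 0 ≤ v j) (i : n) : 0 ≤ (M *ᵥ v) i := by
  simp only [Matrix.mulVec, dotProduct]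
  exact Finset.sum_nonneg fun j _ => mul_nonneg (hM i j) (hv j)

lemma le_of_one_sub_mulVec_le (B : Matrix n n ℝ) (hB : ∀ i j, 0 ≤ B i j)
    (hrow : ∀ i, ∑ j, B i j < 1) {x y : n → ℝ}
    (h : ∀ i, ((1 - B) *ᵥ x) i ≤ ((1 - B) *ᵥ y) i) (i : n) : x i ≤ y i := by
  have hud : IsUnit (1 - B).det := one_sub_isUnit_det B hB hrow
  have hinv := inv_one_sub_entries_nonneg B hB hrow
  have := mulVec_mono (1 - B)⁻¹ hinv h i
  rwa [Matrix.mulVec_mulVec, Matrix.mulVec_mulVec, Matrix.nonsing_inv_mul _ hud,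
    Matrix.one_mulVec, Matrix.one_mulVec] at this

lemma mulVec_inv_one_sub (B : Matrix n n ℝ) (hB : ∀ i j, 0 ≤ B i j)
    (hrow : ∀ i, ∑ j, B i j < 1) (v : n → ℝ) :
    (1 - B) *ᵥ ((1 - B)⁻¹ *ᵥ v) = v := by
  rw [Matrix.mulVec_mulVec, Matrix.mul_nonsing_inv _ (one_sub_isUnit_det B hB hrow),
    Matrix.one_mulVec]

end Core

/-- Drops are nonnegative and entrywise monotone under shrinking the survivor set:
for nonempty `S ⊆ R` and `i ∈ S`, `Δ^S_i ≥ Δ^R_i ≥ 0`. -/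
theorem drop_monotone {N : ℕ} (A : Matrix (Fin N) (Fin N) ℝ) (β : ℝ)
    (hA : ∀ i j, 0 ≤ A i j) (hβ : 0 ≤ β) (hrow : ∀ i, β * ∑ j, A i j < 1)
    (R : Finset (Fin N)) :
    ∀ S : Finset (Fin N), ∀ hSR : S ⊆ R, S.Nonempty →
      ∀ i : Fin N, ∀ hi : i ∈ S,
        drop A β R ⟨i, hSR hi⟩ ≤ drop A β S ⟨i, hi⟩ ∧ 0 ≤ drop A β R ⟨i, hSR hi⟩ := by
  intro S hSR _ i hi
  -- entrywise facts about the full matrix `β • A`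
  have hBfull : ∀ i j, 0 ≤ (β • A) i j := fun i j =>
    mul_nonneg hβ (hA i j)
  have hrowfull : ∀ i, ∑ j, (β • A) i j < 1 := by
    intro i
    simpa [Finset.mul_sum] using hrow i
  -- entrywise facts about submatrices
  have hBT : ∀ T : Finset (Fin N), ∀ (i j : {k // k ∈ T}), 0 ≤ (β • psub A T) i j :=
    fun T i j => mul_nonneg hβ (hA i.1 j.1)
  have hrowT : ∀ T : Finset (Fin N), ∀ i : {k // k ∈ T}, ∑ j, (β • psub A T) i j < 1 := by
    intro T i
    have h1 : ∑ j : {k // k ∈ T}, (β • psub A T) i j = β * ∑ j ∈ T, A i.1 j := by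
      rw [Finset.mul_sum, ← Finset.sum_coe_sort T (fun j => β * A i.1 j)]
      rfl
    rw [h1]
    calc β * ∑ j ∈ T, A i.1 j ≤ β * ∑ j, A i.1 j := by
          refine mul_le_mul_of_nonneg_left ?_ hβ
          exact Finset.sum_le_sum_of_subset_of_nonneg (Finset.subset_univ T)
            (fun j _ _ => hA i.1 j)
      _ < 1 := hrow i.1
  -- the full centrality vector
  set b : Fin N → ℝ := (1 - β • A)⁻¹ *ᵥ (fun _ => 1) with hb
  have hb0 : ∀ j, 0 ≤ b j :=
    mulVec_nonneg _ (inv_one_sub_entries_nonneg _ hBfull hrowfull) (fun _ => zero_le_one)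
  have hbEq : (1 - β • A) *ᵥ b = fun _ => 1 :=
    mulVec_inv_one_sub _ hBfull hrowfull _
  -- basic facts about `bon` on a subset
  have hbonEq : ∀ T : Finset (Fin N),
      (1 - β • psub A T) *ᵥ bon A β T = fun _ => 1 := fun T =>
    mulVec_inv_one_sub _ (hBT T) (hrowT T) _
  have hbon0 : ∀ T : Finset (Fin N), ∀ j, 0 ≤ bon A β T j := fun T =>
    mulVec_nonneg _ (inv_one_sub_entries_nonneg _ (hBT T) (hrowT T)) (fun _ => zero_le_one)
  -- expansion of `(1 - β • psub A T) *ᵥ y` at an index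
  have hexp : ∀ T : Finset (Fin N), ∀ y : {k // k ∈ T} → ℝ, ∀ i : {k // k ∈ T},
      ((1 - β • psub A T) *ᵥ y) i = y i - β * ∑ j : {k // k ∈ T}, A i.1 j.1 * y j := by
    intro T y i
    rw [Matrix.sub_mulVec, Matrix.smul_mulVec, Matrix.one_mulVec]
    simp [Matrix.mulVec, dotProduct, psub, Finset.mul_sum]
  -- Claim 1 : bon R ≤ b on R
  have claim1 : ∀ i : {k // k ∈ R}, bon A β R i ≤ b i.1 := by
    refine le_of_one_sub_mulVec_le _ (hBT R) (hrowT R) ?_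
    intro j
    rw [hbonEq R, hexp R]
    have hfull : b j.1 - β * ∑ k, A j.1 k * b k = 1 := by
      have := congrFun hbEq j.1
      rw [Matrix.sub_mulVec, Matrix.smul_mulVec, Matrix.one_mulVec] at this
      simpa [Matrix.mulVec, dotProduct, Finset.mul_sum] using this
    have hsum : ∑ k : {l // l ∈ R}, A j.1 k.1 * b k.1 ≤ ∑ k, A j.1 k * b k := by
      rw [Finset.sum_coe_sort R (fun k => A j.1 k * b k)]
      exact Finset.sum_le_sum_of_subset_of_nonneg (Finset.subset_univ R)
        (fun k _ _ => mul_nonneg (hA j.1 k) (hb0 k))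
    have : 1 ≤ b j.1 - β * ∑ k : {l // l ∈ R}, A j.1 k.1 * b k.1 := by
      rw [← hfull]
      have := mul_le_mul_of_nonneg_left hsum hβ
      linarith
    simpa using this
  -- extension of `bon R` to all of `Fin N`
  set bR : Fin N → ℝ := fun j => if h : j ∈ R then bon A β R ⟨j, h⟩ else 0 with hbR
  have hbR0 : ∀ j, 0 ≤ bR j := by
    intro j
    by_cases h : j ∈ R <;> simp [hbR, h, hbon0 R]
  have hbRval : ∀ j : {k // k ∈ R}, bR j.1 = bon A β R j := by
    intro j
    simp [hbR, j.2]
  -- Claim 2 : bon S ≤ bon R on S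
  have claim2 : ∀ i : {k // k ∈ S}, bon A β S i ≤ bon A β R ⟨i.1, hSR i.2⟩ := by
    have := le_of_one_sub_mulVec_le (β • psub A S) (hBT S) (hrowT S)
      (x := bon A β S) (y := fun j => bR j.1) ?_
    · intro i
      have h := this i
      rwa [show bR i.1 = bon A β R ⟨i.1, hSR i.2⟩ from by simp [hbR, hSR i.2]] at h
    · intro j
      rw [hbonEq S, hexp S]
      -- `1 = bon R j' - β * ∑_{k ∈ R} A j k * bR k` for `j' = ⟨j.1, _⟩`
      have hRfact : bon A β R ⟨j.1, hSR j.2⟩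
          - β * ∑ k ∈ R, A j.1 k * bR k = 1 := by
        have := congrFun (hbonEq R) ⟨j.1, hSR j.2⟩
        rw [hexp R] at this
        have hsum : ∑ k : {l // l ∈ R}, A j.1 k.1 * bon A β R k
            = ∑ k ∈ R, A j.1 k * bR k := by
          rw [← Finset.sum_coe_sort R (fun k => A j.1 k * bR k)]
          exact Finset.sum_congr rfl fun k _ => by rw [hbRval k]
        rw [hsum] at this
        exact this
      have hsumle : ∑ k ∈ S, A j.1 k * bR k ≤ ∑ k ∈ R, A j.1 k * bR k :=
        Finset.sum_le_sum_of_subset_of_nonneg hSR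
          (fun k _ _ => mul_nonneg (hA j.1 k) (hbR0 k))
      have hSsum : ∑ k : {l // l ∈ S}, A j.1 k.1 * bR k.1 = ∑ k ∈ S, A j.1 k * bR k :=
        Finset.sum_coe_sort S (fun k => A j.1 k * bR k)
      have hy : bR j.1 = bon A β R ⟨j.1, hSR j.2⟩ := by
        simp [hbR, hSR j.2]
      show (1:ℝ) ≤ bR j.1 - β * ∑ k : {l // l ∈ S}, A j.1 k.1 * bR k.1
      rw [hy, hSsum]
      have := mul_le_mul_of_nonneg_left hsumle hβ
      linarith
  -- conclusion
  constructor
  · have h2 := claim2 ⟨i, hi⟩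
    simp only [drop]
    linarith
  · have h1 := claim1 ⟨i, hSR hi⟩
    simp only [drop]
    simpa [hb] using sub_nonneg.mpr h1
end

section
/- Let A be an N×N real matrix with nonnegative entries and β ≥ 0 with β · max_i ∑_j A_{ij} < 1. Let b = (I − β A)^{-1} 𝟙, b̲ = min_i b_i, P = {i : b_i = b̲}, R = {i : b_i > b̲}, and for i ∈ R let d^R_i = ∑_{j ∈ P} A_{ij}; set q = β b̲ (I − β A_{RR})^{-1} d^R. If q_i ≥ b_i − b̲ for all i ∈ R, then for every nonempty subset S ⊆ R and every i ∈ S, the Bonacich centrality of i on the induced subnetwork satisfies [(I − β A[S])^{-1} 𝟙_S]_i ≤ b̲. -/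
open Matrix

attribute [local instance] Matrix.linftyOpNormedAddCommGroup Matrix.linftyOpNormedRing

noncomputable local instance mcs {m : Type*} [Fintype m] [DecidableEq m] :
    @CompleteSpace (Matrix m m ℝ) (PseudoMetricSpace.toUniformSpace (self := (inferInstance : NormedRing (Matrix m m ℝ)).toSeminormedRing.toPseudoMetricSpace)) :=
  (by infer_instance : CompleteSpace (m → m → ℝ))

lemma norm_psub_lt {N : ℕ} (A : Matrix (Fin N) (Fin N) ℝ) (β : ℝ)
    (hA : ∀ i j, 0 ≤ A i j) (hβ : 0 ≤ β) (hrow : ∀ i, β * ∑ j, A i j < 1)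
    (S : Finset (Fin N)) : ‖β • psub A S‖ < 1 := by
  have h0 : (0:ℝ) ≤ 1 := one_pos.le
  rw [linfty_opNorm_def]
  rw [show ((1:ℝ)) = ((1 : NNReal) : ℝ) by simp]
  rw [NNReal.coe_lt_coe]
  refine Finset.sup_lt_iff (by norm_num) |>.2 ?_
  intro i _
  rw [← NNReal.coe_lt_coe]
  push_cast
  have : ∀ j : {x // x ∈ S}, ‖(β • psub A S) i j‖ = β * A i.1 j.1 := by
    intro j
    simp only [Matrix.smul_apply, psub, Matrix.of_apply, smul_eq_mul, Real.norm_eq_abs]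
    rw [abs_of_nonneg (mul_nonneg hβ (hA _ _))]
  calc ∑ j, ((‖(β • psub A S) i j‖₊ : ℝ)) = ∑ j : {x // x ∈ S}, β * A i.1 j.1 := by
        simp_rw [coe_nnnorm]; exact Finset.sum_congr rfl fun j _ => this j
    _ = β * ∑ j ∈ S, A i.1 j := by
        rw [Finset.mul_sum]
        exact Finset.sum_coe_sort S fun j => β * A i.1 j
    _ ≤ β * ∑ j, A i.1 j := by
        refine mul_le_mul_of_nonneg_left ?_ hβ
        exact Finset.sum_le_sum_of_subset_of_nonneg (Finset.subset_univ S) fun j _ _ => hA _ _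
    _ < 1 := hrow i.1

lemma psub_entry_nonneg {N : ℕ} {A : Matrix (Fin N) (Fin N) ℝ} {β : ℝ}
    (hA : ∀ i j, 0 ≤ A i j) (hβ : 0 ≤ β) (S : Finset (Fin N)) (i j : {x // x ∈ S}) :
    0 ≤ (β • psub A S) i j :=
  mul_nonneg hβ (hA _ _)

lemma pow_entry_nonneg_s14 {N : ℕ} {A : Matrix (Fin N) (Fin N) ℝ} {β : ℝ}
    (hA : ∀ i j, 0 ≤ A i j) (hβ : 0 ≤ β) (S : Finset (Fin N)) :
    ∀ n, ∀ i j : {x // x ∈ S}, 0 ≤ ((β • psub A S) ^ n) i j := by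
  intro n
  induction n with
  | zero =>
    intro i j
    simp only [pow_zero, Matrix.one_apply]
    split <;> norm_num
  | succ n ih =>
    intro i j
    rw [pow_succ, Matrix.mul_apply]
    exact Finset.sum_nonneg fun k _ => mul_nonneg (ih i k) (psub_entry_nonneg hA hβ S k j)

lemma pow_entry_mono {N : ℕ} {A : Matrix (Fin N) (Fin N) ℝ} {β : ℝ}
    (hA : ∀ i j, 0 ≤ A i j) (hβ : 0 ≤ β) {S R : Finset (Fin N)} (hSR : S ⊆ R) :
    ∀ n, ∀ i j : {x // x ∈ S},
      ((β • psub A S) ^ n) i j ≤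
        ((β • psub A R) ^ n) ⟨i.1, hSR i.2⟩ ⟨j.1, hSR j.2⟩ := by
  set e : {x // x ∈ S} → {x // x ∈ R} := fun x => ⟨x.1, hSR x.2⟩ with he
  have hinj : Function.Injective e := fun a b h => Subtype.ext (Subtype.mk_eq_mk.mp h)
  intro n
  induction n with
  | zero =>
    intro i j
    simp only [pow_zero, Matrix.one_apply]
    by_cases h : i = j
    · simp [h]
    · have h' : e i ≠ e j := fun hc => h (hinj hc)
      simp only [e] at h'
      rw [if_neg h, if_neg h']
  | succ n ih =>
    intro i j
    rw [pow_succ, Matrix.mul_apply, pow_succ, Matrix.mul_apply]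
    calc ∑ k : {x // x ∈ S}, ((β • psub A S) ^ n) i k * (β • psub A S) k j
        ≤ ∑ k : {x // x ∈ S},
            ((β • psub A R) ^ n) (e i) (e k) * (β • psub A R) (e k) (e j) := by
          refine Finset.sum_le_sum fun k _ => ?_
          have h1 := ih i k
          have h2 : (β • psub A S) k j = (β • psub A R) (e k) (e j) := rfl
          rw [h2]
          exact mul_le_mul_of_nonneg_right h1 (psub_entry_nonneg hA hβ R _ _)
      _ = ∑ k ∈ Finset.univ.image e,
            ((β • psub A R) ^ n) (e i) k * (β • psub A R) k (e j) := by
          rw [Finset.sum_image (fun a _ b _ h => hinj h)]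
      _ ≤ ∑ k : {x // x ∈ R}, ((β • psub A R) ^ n) (e i) k * (β • psub A R) k (e j) := by
          refine Finset.sum_le_sum_of_subset_of_nonneg (Finset.subset_univ _) fun k _ _ => ?_
          exact mul_nonneg (pow_entry_nonneg_s14 hA hβ R n _ _) (psub_entry_nonneg hA hβ R _ _)

lemma hasSum_inv_entry {N : ℕ} (A : Matrix (Fin N) (Fin N) ℝ) (β : ℝ)
    (hA : ∀ i j, 0 ≤ A i j) (hβ : 0 ≤ β) (hrow : ∀ i, β * ∑ j, A i j < 1)
    (S : Finset (Fin N)) (i j : {x // x ∈ S}) :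
    HasSum (fun n => ((β • psub A S) ^ n) i j) ((1 - β • psub A S)⁻¹ i j) := by
  have hn := norm_psub_lt A β hA hβ hrow S
  have h := hasSum_geom_series_inverse (β • psub A S) hn
  rw [← Matrix.nonsing_inv_eq_ringInverse] at h
  have hc : Continuous fun M : Matrix {x // x ∈ S} {x // x ∈ S} ℝ => M i j :=
    Continuous.matrix_elem continuous_id i j
  exact h.map (AddMonoidHom.mk' (fun M : Matrix {x // x ∈ S} {x // x ∈ S} ℝ => M i j)
    fun _ _ => rfl) hc

lemma inv_entry_nonneg_s14 {N : ℕ} (A : Matrix (Fin N) (Fin N) ℝ) (β : ℝ)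
    (hA : ∀ i j, 0 ≤ A i j) (hβ : 0 ≤ β) (hrow : ∀ i, β * ∑ j, A i j < 1)
    (S : Finset (Fin N)) (i j : {x // x ∈ S}) :
    0 ≤ (1 - β • psub A S)⁻¹ i j :=
  hasSum_le (fun n => pow_entry_nonneg_s14 hA hβ S n i j) hasSum_zero
    (hasSum_inv_entry A β hA hβ hrow S i j)

lemma inv_entry_mono {N : ℕ} (A : Matrix (Fin N) (Fin N) ℝ) (β : ℝ)
    (hA : ∀ i j, 0 ≤ A i j) (hβ : 0 ≤ β) (hrow : ∀ i, β * ∑ j, A i j < 1)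
    {S R : Finset (Fin N)} (hSR : S ⊆ R) (i j : {x // x ∈ S}) :
    (1 - β • psub A S)⁻¹ i j ≤ (1 - β • psub A R)⁻¹ ⟨i.1, hSR i.2⟩ ⟨j.1, hSR j.2⟩ :=
  hasSum_le (fun n => pow_entry_mono hA hβ hSR n i j)
    (hasSum_inv_entry A β hA hβ hrow S i j)
    (hasSum_inv_entry A β hA hβ hrow R ⟨i.1, hSR i.2⟩ ⟨j.1, hSR j.2⟩)

lemma bon_mono_s14 {N : ℕ} (A : Matrix (Fin N) (Fin N) ℝ) (β : ℝ)
    (hA : ∀ i j, 0 ≤ A i j) (hβ : 0 ≤ β) (hrow : ∀ i, β * ∑ j, A i j < 1)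
    {S R : Finset (Fin N)} (hSR : S ⊆ R) (i : Fin N) (hi : i ∈ S) :
    bon A β S ⟨i, hi⟩ ≤ bon A β R ⟨i, hSR hi⟩ := by
  set e : {x // x ∈ S} → {x // x ∈ R} := fun x => ⟨x.1, hSR x.2⟩ with he
  have hinj : Function.Injective e := fun a b h => Subtype.ext (Subtype.mk_eq_mk.mp h)
  unfold bon
  rw [Matrix.mulVec, Matrix.mulVec]
  simp only [dotProduct, mul_one]
  calc ∑ j : {x // x ∈ S}, (1 - β • psub A S)⁻¹ ⟨i, hi⟩ j
      ≤ ∑ j : {x // x ∈ S}, (1 - β • psub A R)⁻¹ (e ⟨i, hi⟩) (e j) :=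
        Finset.sum_le_sum fun j _ => inv_entry_mono A β hA hβ hrow hSR ⟨i, hi⟩ j
    _ = ∑ j ∈ Finset.univ.image e, (1 - β • psub A R)⁻¹ (e ⟨i, hi⟩) j := by
        rw [Finset.sum_image (fun a _ b _ h => hinj h)]
    _ ≤ ∑ j : {x // x ∈ R}, (1 - β • psub A R)⁻¹ (e ⟨i, hi⟩) j :=
        Finset.sum_le_sum_of_subset_of_nonneg (Finset.subset_univ _)
          (fun j _ _ => inv_entry_nonneg_s14 A β hA hβ hrow R _ _)

lemma norm_full_lt {N : ℕ} (A : Matrix (Fin N) (Fin N) ℝ) (β : ℝ)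
    (hA : ∀ i j, 0 ≤ A i j) (hβ : 0 ≤ β) (hrow : ∀ i, β * ∑ j, A i j < 1) :
    ‖β • A‖ < 1 := by
  rw [linfty_opNorm_def]
  rw [show ((1:ℝ)) = ((1 : NNReal) : ℝ) by simp]
  rw [NNReal.coe_lt_coe]
  refine Finset.sup_lt_iff (by norm_num) |>.2 ?_
  intro i _
  rw [← NNReal.coe_lt_coe]
  push_cast
  calc ∑ j, ((‖(β • A) i j‖₊ : ℝ)) = ∑ j, β * A i j := by
        refine Finset.sum_congr rfl fun j _ => ?_
        rw [coe_nnnorm]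
        simp only [Matrix.smul_apply, smul_eq_mul, Real.norm_eq_abs]
        rw [abs_of_nonneg (mul_nonneg hβ (hA _ _))]
    _ = β * ∑ j, A i j := by rw [Finset.mul_sum]
    _ < 1 := hrow i

/-- If `q_i ≥ b_i - b̲` for all rich nodes `i ∈ R`, then in every nonempty induced
subnetwork `S ⊆ R`, every node's Bonacich centrality is at most `b̲`. -/
theorem rich_subsets_collapse {N : ℕ} (A : Matrix (Fin N) (Fin N) ℝ) (β : ℝ)
    (hA : ∀ i j, 0 ≤ A i j) (hβ : 0 ≤ β) (hrow : ∀ i, β * ∑ j, A i j < 1)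
    (b : Fin N → ℝ) (hb : b = (1 - β • A)⁻¹ *ᵥ fun _ => 1)
    (bmin : ℝ) (hmin_le : ∀ i, bmin ≤ b i) (hmin_attained : ∃ i, b i = bmin)
    (P R : Finset (Fin N))
    (hP : P = Finset.univ.filter fun i => b i = bmin)
    (hR : R = Finset.univ.filter fun i => bmin < b i)
    (dR : {i // i ∈ R} → ℝ) (hdR : dR = fun i => ∑ j ∈ P, A i.1 j)
    (q : {i // i ∈ R} → ℝ)
    (hq : q = (β * bmin) • ((1 - β • psub A R)⁻¹ *ᵥ dR))
    (hcond : ∀ i : {i // i ∈ R}, b i.1 - bmin ≤ q i) :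
    ∀ S : Finset (Fin N), S ⊆ R → S.Nonempty →
      ∀ i : Fin N, ∀ hi : i ∈ S, bon A β S ⟨i, hi⟩ ≤ bmin := by
  -- `(1 - βA) b = 1`
  have hufull : IsUnit (1 - β • A) :=
    isUnit_one_sub_of_norm_lt_one (norm_full_lt A β hA hβ hrow)
  have hdfull : IsUnit (1 - β • A).det := (Matrix.isUnit_iff_isUnit_det _).mp hufull
  have hbfull : (1 - β • A) *ᵥ b = fun _ => 1 := by
    rw [hb, Matrix.mulVec_mulVec, Matrix.mul_nonsing_inv _ hdfull, Matrix.one_mulVec]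
  have hbeq : ∀ i, b i - β * ∑ j, A i j * b j = 1 := by
    intro i
    have := congrFun hbfull i
    rwa [Matrix.sub_mulVec, Matrix.one_mulVec, Matrix.smul_mulVec, Pi.sub_apply,
      Pi.smul_apply, smul_eq_mul, Matrix.mulVec, dotProduct] at this
  -- split the sum over `P` and `R`
  have hsplit : ∀ i, ∑ j, A i j * b j = (∑ j ∈ P, A i j * b j) + ∑ j ∈ R, A i j * b j := by
    intro i
    rw [hP, hR, ← Finset.sum_filter_add_sum_filter_not Finset.univ (fun j => b j = bmin)]
    congr 1
    refine Finset.sum_congr (Finset.filter_congr fun j _ => ?_) fun _ _ => rfl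
    constructor
    · intro h; exact lt_of_le_of_ne (hmin_le j) (Ne.symm h)
    · intro h; exact ne_of_gt h
  have hPsum : ∀ i : {x // x ∈ R}, ∑ j ∈ P, A i.1 j * b j = dR i * bmin := by
    intro i
    rw [hdR, Finset.sum_mul]
    refine Finset.sum_congr rfl fun j hj => ?_
    rw [hP] at hj
    rw [(Finset.mem_filter.mp hj).2]
  -- the key identity `(1 - βA_RR) b_R = 1 + β bmin dR`
  have hkey : (1 - β • psub A R) *ᵥ (fun j : {x // x ∈ R} => b j.1)
      = (fun _ => 1) + (β * bmin) • dR := by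
    funext i
    rw [Matrix.sub_mulVec, Matrix.one_mulVec, Matrix.smul_mulVec, Pi.sub_apply,
      Pi.smul_apply, smul_eq_mul, Matrix.mulVec, dotProduct, Pi.add_apply,
      Pi.smul_apply, smul_eq_mul]
    have hcoe : ∑ j : {x // x ∈ R}, psub A R i j * b j.1 = ∑ j ∈ R, A i.1 j * b j :=
      Finset.sum_coe_sort R fun j => A i.1 j * b j
    rw [hcoe]
    have h1 := hbeq i.1
    rw [hsplit i.1, hPsum i] at h1
    ring_nf
    ring_nf at h1
    linarith
  -- invert
  have huR : IsUnit (1 - β • psub A R) :=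
    isUnit_one_sub_of_norm_lt_one (norm_psub_lt A β hA hβ hrow R)
  have hdR' : IsUnit (1 - β • psub A R).det := (Matrix.isUnit_iff_isUnit_det _).mp huR
  have hvq : (fun j : {x // x ∈ R} => b j.1) = bon A β R + q := by
    have h2 := congrArg (fun w => (1 - β • psub A R)⁻¹ *ᵥ w) hkey
    simp only at h2
    rw [Matrix.mulVec_mulVec, Matrix.nonsing_inv_mul _ hdR', Matrix.one_mulVec,
      Matrix.mulVec_add, Matrix.mulVec_smul] at h2
    rw [h2, hq, bon]
  have hbonR : ∀ i : {x // x ∈ R}, bon A β R i ≤ bmin := by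
    intro i
    have := congrFun hvq i
    rw [Pi.add_apply] at this
    have hc := hcond i
    linarith
  intro S hSR hS i hi
  exact le_trans (bon_mono_s14 A β hA hβ hrow hSR i hi) (hbonR ⟨i, hSR hi⟩)
end
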